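/- Let k ≥ 2, c ∈ ℂ×, and λ ∈ ℂ× satisfy (z² + c)^{∘k} = (λz² + λc)^{∘k} as polynomials. Then λ = 1. (Comparing the leading coefficient gives λ^{2^k − 1} = 1; for k ≥ 2, comparing the coefficient of z^{2^k − 4} gives 2^{k−3}(2^k − 2)c² + 2^{k−2}c = 2^{k−3}(2^k − 2)λ^{2^k−1}c² + 2^{k−2}λ^{2^k−3}c, whence λ² = 1 and then λ = 1.) -/

import Mathlib

open Polynomial

/-- The `n`-th compositional iterate of a polynomial. -/
noncomputable def polyIter (φ : Polynomial ℂ) (n : ℕ) : Polynomial ℂ :=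
  (fun q => φ.comp q)^[n] Polynomial.X

noncomputable def aC (l : ℂ) : ℕ → ℂ
  | 0 => l ^ 3
  | m + 1 => l * (aC l m) ^ 2

noncomputable def bC (l c : ℂ) : ℕ → ℂ
  | 0 => 2 * l ^ 3 * c
  | m + 1 => 2 * l * aC l m * bC l c m

noncomputable def dC (l c : ℂ) : ℕ → ℂ
  | 0 => l ^ 3 * c ^ 2 + l * c
  | m + 1 => l * (2 * aC l m * dC l c m + (bC l c m) ^ 2)

noncomputable def wC (l : ℂ) : ℕ → ℂ
  | 0 => l
  | m + 1 => 2 * l * aC l m * wC l m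

noncomputable def uC (c : ℂ) : ℕ → ℂ
  | 0 => c ^ 2
  | m + 1 => 2 * uC c m + (bC 1 c m) ^ 2

def Mn : ℕ → ℕ
  | 0 => 0
  | m + 1 => 2 * Mn m + 4

lemma wbLe {a b : ℕ} (h : a ≤ b) : (a : WithBot ℕ) ≤ (b : WithBot ℕ) := by exact_mod_cast h
lemma wbLt {a b : ℕ} (h : a < b) : (a : WithBot ℕ) < (b : WithBot ℕ) := by exact_mod_cast h
lemma wbAdd (a b : ℕ) : ((a + b : ℕ) : WithBot ℕ) = (a : WithBot ℕ) + (b : WithBot ℕ) := by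
  push_cast; ring

lemma iter_step (l c : ℂ) (n : ℕ) :
    polyIter (C l * X ^ 2 + C (l * c)) (n + 1)
      = C l * (polyIter (C l * X ^ 2 + C (l * c)) n) ^ 2 + C (l * c) := by
  rw [polyIter, polyIter, Function.iterate_succ_apply']
  simp [add_comp, mul_comp, pow_comp]

lemma key (l c : ℂ) (m : ℕ) :
    ∃ e : ℂ[X], polyIter (C l * X ^ 2 + C (l * c)) (m + 2)
      = C (aC l m) * X ^ (Mn m + 4) + C (bC l c m) * X ^ (Mn m + 2)
        + C (dC l c m) * X ^ (Mn m) + e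
      ∧ e.degree < (Mn m : WithBot ℕ) := by
  induction m with
  | zero =>
    refine ⟨0, ?_, by simp [Mn]⟩
    rw [iter_step, iter_step]
    simp only [polyIter, Function.iterate_zero_apply, aC, bC, dC, Mn, map_add, map_mul, map_pow,
      map_ofNat, pow_zero, Nat.zero_add]
    ring
  | succ m ih =>
    obtain ⟨e, hp, he⟩ := ih
    set A := aC l m
    set B := bC l c m
    set D := dC l c m
    set M := Mn m with hMdef
    refine ⟨C l * (C (2 * B * D) * X ^ (2 * M + 2) + C (D ^ 2) * X ^ (2 * M)
        + 2 * (C A * X ^ (M + 4) + C B * X ^ (M + 2) + C D * X ^ M) * e + e ^ 2) + C (l * c),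
      ?_, ?_⟩
    · rw [iter_step, hp]
      have hM : Mn (m + 1) = 2 * M + 4 := rfl
      have e1 : Mn (m + 1) + 4 = (M + 4) + (M + 4) := by omega
      have e2 : Mn (m + 1) + 2 = (M + 4) + (M + 2) := by omega
      have e3 : Mn (m + 1) = (M + 4) + M := by omega
      have e4 : 2 * M + 2 = (M + 2) + M := by omega
      have e5 : 2 * M = M + M := by omega
      rw [e1, e2, e3, e4, e5]
      simp only [aC, bC, dC, pow_add, map_add, map_mul, map_pow, map_ofNat]
      ring
    · have hM : (Mn (m + 1) : WithBot ℕ) = ((2 * M + 4 : ℕ) : WithBot ℕ) := rfl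
      rw [hM]
      have hmain : (C A * X ^ (M + 4) + C B * X ^ (M + 2) + C D * X ^ M).degree
          ≤ ((M + 4 : ℕ) : WithBot ℕ) := by
        refine le_trans (degree_add_le _ _) (max_le (le_trans (degree_add_le _ _) (max_le ?_ ?_)) ?_)
        · exact degree_C_mul_X_pow_le _ _
        · exact le_trans (degree_C_mul_X_pow_le _ _) (wbLe (by omega))
        · exact le_trans (degree_C_mul_X_pow_le _ _) (wbLe (by omega))
      refine lt_of_le_of_lt (degree_add_le _ _) (max_lt ?_ ?_)
      · refine lt_of_le_of_lt ((degree_mul_le _ _).trans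
          (by calc (C l).degree + _ ≤ 0 + _ := add_le_add degree_C_le le_rfl
                _ = _ := zero_add _)) ?_
        refine lt_of_le_of_lt (degree_add_le _ _) (max_lt ?_ ?_)
        · refine lt_of_le_of_lt (degree_add_le _ _) (max_lt ?_ ?_)
          · refine lt_of_le_of_lt (degree_add_le _ _) (max_lt ?_ ?_)
            · exact lt_of_le_of_lt (degree_C_mul_X_pow_le _ _) (wbLt (by omega))
            · exact lt_of_le_of_lt (degree_C_mul_X_pow_le _ _) (wbLt (by omega))
          · -- 2 * main * e
            refine lt_of_le_of_lt (degree_mul_le _ _) ?_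
            have h2m : (2 * (C A * X ^ (M + 4) + C B * X ^ (M + 2) + C D * X ^ M)).degree
                ≤ ((M + 4 : ℕ) : WithBot ℕ) := by
              refine le_trans (degree_mul_le _ _) ?_
              calc (2 : ℂ[X]).degree + _ ≤ 0 + ((M + 4 : ℕ) : WithBot ℕ) :=
                    add_le_add (by rw [← map_ofNat C 2]; exact degree_C_le) hmain
                _ = ((M + 4 : ℕ) : WithBot ℕ) := by rw [zero_add]
            calc _ ≤ ((M + 4 : ℕ) : WithBot ℕ) + e.degree := add_le_add h2m le_rfl
              _ < ((M + 4 : ℕ) : WithBot ℕ) + (M : WithBot ℕ) :=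
                  WithBot.add_lt_add_left (by exact_mod_cast WithBot.coe_ne_bot) he
              _ = ((2 * M + 4 : ℕ) : WithBot ℕ) := by push_cast; ring
        · -- e ^ 2
          have h2 : (e ^ 2).degree = (e * e).degree := by rw [sq]
          rw [h2]
          refine lt_of_le_of_lt (degree_mul_le _ _) ?_
          calc e.degree + e.degree ≤ (M : WithBot ℕ) + e.degree :=
                add_le_add he.le le_rfl
            _ < (M : WithBot ℕ) + (M : WithBot ℕ) :=
                WithBot.add_lt_add_left (by exact_mod_cast WithBot.coe_ne_bot) he
            _ ≤ ((2 * M + 4 : ℕ) : WithBot ℕ) := by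
                rw [show ((M:WithBot ℕ) + (M:WithBot ℕ)) = ((M + M : ℕ) : WithBot ℕ) by push_cast; ring]
                exact wbLe (by omega)
      · exact lt_of_le_of_lt degree_C_le (by exact_mod_cast Nat.zero_lt_succ _)

lemma aone (m : ℕ) : aC 1 m = 1 := by
  induction m with
  | zero => simp [aC]
  | succ m ih => simp [aC, ih]

lemma apow (l : ℂ) (m : ℕ) : l * aC l m = l ^ (2 ^ (m + 2)) := by
  induction m with
  | zero => simp [aC]; ring
  | succ m ih =>
    have h2 : 2 ^ (m + 1 + 2) = 2 ^ (m + 2) * 2 := by ring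
    rw [show aC l (m + 1) = l * (aC l m) ^ 2 from rfl, h2, pow_mul, ← ih]; ring

lemma bfact (l c : ℂ) (m : ℕ) : bC l c m = aC l m * bC 1 c m := by
  induction m with
  | zero => simp [aC, bC]; ring
  | succ m ih =>
    rw [show bC l c (m + 1) = 2 * l * aC l m * bC l c m from rfl,
      show bC 1 c (m + 1) = 2 * 1 * aC 1 m * bC 1 c m from rfl,
      show aC l (m + 1) = l * (aC l m) ^ 2 from rfl, aone, ih]
    ring

lemma dfact (l c : ℂ) (m : ℕ) : dC l c m = aC l m * uC c m + wC l m * c := by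
  induction m with
  | zero => simp [aC, dC, uC, wC]
  | succ m ih =>
    rw [show dC l c (m + 1) = l * (2 * aC l m * dC l c m + (bC l c m) ^ 2) from rfl,
      show aC l (m + 1) = l * (aC l m) ^ 2 from rfl,
      show uC c (m + 1) = 2 * uC c m + (bC 1 c m) ^ 2 from rfl,
      show wC l (m + 1) = 2 * l * aC l m * wC l m from rfl, ih, bfact]
    ring

lemma wfact (l : ℂ) (m : ℕ) : l ^ 3 * wC l m = l ^ (2 ^ (m + 2)) * wC 1 m := by
  induction m with
  | zero => simp [wC]; ring
  | succ m ih =>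
    have h2 : 2 ^ (m + 1 + 2) = 2 ^ (m + 2) * 2 := by ring
    rw [wC, wC, aone, h2, pow_mul]
    calc l ^ 3 * (2 * l * aC l m * wC l m) = 2 * (l * aC l m) * (l ^ 3 * wC l m) := by ring
      _ = 2 * l ^ 2 ^ (m + 2) * (l ^ 2 ^ (m + 2) * wC 1 m) := by rw [apow, ih]
      _ = (l ^ 2 ^ (m + 2)) ^ 2 * (2 * 1 * 1 * wC 1 m) := by ring

lemma wone (m : ℕ) : wC 1 m = 2 ^ m := by
  induction m with
  | zero => simp [wC]
  | succ m ih => rw [wC, aone, ih]; ring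

lemma myCoeffs (A B D : ℂ) (M : ℕ) (e : ℂ[X]) (he : e.degree < (M : WithBot ℕ)) :
    (C A * X ^ (M + 4) + C B * X ^ (M + 2) + C D * X ^ M + e).coeff (M + 4) = A ∧
    (C A * X ^ (M + 4) + C B * X ^ (M + 2) + C D * X ^ M + e).coeff M = D := by
  have h4 : e.coeff (M + 4) = 0 :=
    coeff_eq_zero_of_degree_lt (lt_of_lt_of_le he (wbLe (by omega)))
  have h0 : e.coeff M = 0 := coeff_eq_zero_of_degree_lt he
  constructor
  · rw [coeff_add, coeff_add, coeff_add, coeff_C_mul, coeff_C_mul, coeff_C_mul,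
      coeff_X_pow, coeff_X_pow, coeff_X_pow, if_pos rfl, if_neg (by omega),
      if_neg (by omega), h4]
    ring
  · rw [coeff_add, coeff_add, coeff_add, coeff_C_mul, coeff_C_mul, coeff_C_mul,
      coeff_X_pow, coeff_X_pow, coeff_X_pow, if_pos rfl, if_neg (by omega),
      if_neg (by omega), h0]
    ring

/-- If `(z² + c)^{∘k} = (λz² + λc)^{∘k}` with `k ≥ 2` and `c, λ ≠ 0`,
then `λ = 1`. -/
theorem stmt9 (k : ℕ) (hk : 2 ≤ k) (c lam : ℂ) (hc : c ≠ 0) (hl : lam ≠ 0)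
    (h : polyIter (X ^ 2 + C c) k = polyIter (C lam * X ^ 2 + C (lam * c)) k) :
    lam = 1 := by
  obtain ⟨m, rfl⟩ : ∃ m, k = m + 2 := ⟨k - 2, by omega⟩
  have hφ : (X ^ 2 + C c : ℂ[X]) = C (1 : ℂ) * X ^ 2 + C (1 * c) := by simp
  rw [hφ] at h
  obtain ⟨e1, hp1, he1⟩ := key 1 c m
  obtain ⟨e2, hp2, he2⟩ := key lam c m
  rw [hp1, hp2] at h
  have c1 := (myCoeffs (aC 1 m) (bC 1 c m) (dC 1 c m) (Mn m) e1 he1).1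
  have c2 := (myCoeffs (aC lam m) (bC lam c m) (dC lam c m) (Mn m) e2 he2).1
  have d1 := (myCoeffs (aC 1 m) (bC 1 c m) (dC 1 c m) (Mn m) e1 he1).2
  have d2 := (myCoeffs (aC lam m) (bC lam c m) (dC lam c m) (Mn m) e2 he2).2
  have hA : aC 1 m = aC lam m := by rw [← c1, ← c2, h]
  have hD : dC 1 c m = dC lam c m := by rw [← d1, ← d2, h]
  rw [aone] at hA
  have hA' : aC lam m = 1 := hA.symm
  have hpow : lam ^ (2 ^ (m + 2)) = lam := by rw [← apow lam m, hA', mul_one]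
  rw [dfact, dfact, aone, one_mul, hA', one_mul] at hD
  have hw : wC 1 m = wC lam m :=
    mul_right_cancel₀ hc (by linear_combination hD)
  have hw1 : wC 1 m ≠ 0 := by rw [wone]; exact pow_ne_zero m two_ne_zero
  have h3 : lam ^ 3 = lam := by
    have := wfact lam m
    rw [← hw, hpow] at this
    exact mul_right_cancel₀ hw1 this
  have h2 : lam ^ 2 = 1 := mul_left_cancel₀ hl (by linear_combination h3)
  calc lam = lam ^ (2 ^ (m + 2)) := hpow.symm
    _ = (lam ^ 2) ^ (2 ^ (m + 1)) := by rw [← pow_mul]; congr 1; ring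
    _ = 1 := by rw [h2, one_pow]
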